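/- The function X ↦ log det X is strictly concave on the set of symmetric positive definite real n×n matrices: if X and Y are symmetric positive definite with X ≠ Y and t ∈ (0, 1), then log det(t • X + (1 − t) • Y) > t · log det X + (1 − t) · log det Y. (This strict concavity of the log-determinant on positive definite matrices is the analytic core of the strict convexity of H_lik established in Proposition 3.) -/

import Mathlib

open Matrix

private lemma posDef_conj_aux {n : ℕ} {Y B : Matrix (Fin n) (Fin n) ℝ}
    (hY : Y.PosDef) (hB : IsUnit B) (hBH : Bᴴ = B) : (B * Y * B).PosDef := by
  refine posDef_iff_dotProduct_mulVec.mpr ⟨?_, fun x hx => ?_⟩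
  · rw [show B * Y * B = Bᴴ * Y * B by rw [hBH]]
    exact isHermitian_conjTranspose_mul_mul B hY.1
  have hBx : B *ᵥ x ≠ 0 := by
    intro h
    exact hx (Matrix.mulVec_injective_iff_isUnit.mpr hB (by simpa using h))
  have := hY.dotProduct_mulVec_pos hBx
  rw [show B * Y * B = Bᴴ * Y * B by rw [hBH]]
  simpa only [star_mulVec, dotProduct_mulVec, vecMul_vecMul] using this

private lemma posDef_of_posSemidef_det_ne_zero {n : ℕ} {S : Matrix (Fin n) (Fin n) ℝ}
    (hS : S.PosSemidef) (hdet : S.det ≠ 0) : S.PosDef := by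
  refine posDef_iff_dotProduct_mulVec.mpr ⟨hS.1, fun x hx => ?_⟩
  rcases lt_or_eq_of_le (hS.dotProduct_mulVec_nonneg x) with h | h
  · exact h
  · exfalso
    have h0 : S *ᵥ x = 0 := (hS.dotProduct_mulVec_zero_iff x).mp h.symm
    have : Function.Injective S.mulVec :=
      Matrix.mulVec_injective_iff_isUnit.mpr ((Matrix.isUnit_iff_isUnit_det S).mpr hdet.isUnit)
    exact hx (this (by simpa using h0))

/-- Strict concavity of `log det` on symmetric positive definite matrices:
for `X ≠ Y` positive definite and `t ∈ (0,1)`,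
`log det(t•X + (1−t)•Y) > t·log det X + (1−t)·log det Y`. -/
theorem logDet_strictConcave
    (n : ℕ) (hn : 1 ≤ n)
    (X Y : Matrix (Fin n) (Fin n) ℝ) (hX : X.PosDef) (hY : Y.PosDef)
    (hXY : X ≠ Y) (t : ℝ) (ht : t ∈ Set.Ioo (0 : ℝ) 1) :
    t * Real.log X.det + (1 - t) * Real.log Y.det
      < Real.log (t • X + (1 - t) • Y).det := by
  obtain ⟨ht0, ht1⟩ := ht
  have ht1' : 0 < 1 - t := by linarith
  -- the square root S of X
  open scoped MatrixOrder in
  set S := CFC.sqrt X with hSdef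
  open scoped MatrixOrder in
  have hSps : S.PosSemidef := (CFC.sqrt_nonneg X).posSemidef
  open scoped MatrixOrder in
  have hSS : S * S = X := CFC.sqrt_mul_sqrt_self X hX.posSemidef.nonneg
  have hXdet : 0 < X.det := hX.det_pos
  have hSdet : S.det ≠ 0 := by
    intro h
    have : X.det = S.det * S.det := by rw [← hSS, det_mul]
    rw [this, h] at hXdet; simp at hXdet
  have hS : S.PosDef := posDef_of_posSemidef_det_ne_zero hSps hSdet
  have hSH : Sᴴ = S := hS.1
  -- its inverse T
  set T := S⁻¹ with hTdef
  have hT : T.PosDef := hS.inv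
  have hTH : Tᴴ = T := hT.1
  have hST : S * T = 1 := mul_nonsing_inv S hSdet.isUnit
  have hTS : T * S = 1 := nonsing_inv_mul S hSdet.isUnit
  -- the matrix M = T Y T
  set M := T * Y * T with hMdef
  have hM : M.PosDef := posDef_conj_aux hY ((Matrix.isUnit_iff_isUnit_det _).mpr (by rw [det_nonsing_inv]; exact isUnit_ringInverse.mpr hSdet.isUnit)) hTH
  have hSMS : S * M * S = Y := by
    rw [hMdef]
    calc S * (T * Y * T) * S = (S * T) * Y * (T * S) := by noncomm_ring
    _ = Y := by rw [hST, hTS, one_mul, mul_one]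
  -- eigenvalues of M
  set lam := hM.1.eigenvalues with hlamdef
  have hlam_pos : ∀ i, 0 < lam i := hM.eigenvalues_pos
  set U : Matrix (Fin n) (Fin n) ℝ := (hM.1.eigenvectorUnitary : Matrix (Fin n) (Fin n) ℝ) with hUdef
  have hUU : U * star U = 1 := Matrix.mem_unitaryGroup_iff.mp hM.1.eigenvectorUnitary.2
  have hspec : M = U * diagonal (RCLike.ofReal ∘ lam) * star U := hM.1.spectral_theorem
  have hcoe : (RCLike.ofReal ∘ lam : Fin n → ℝ) = lam := by
    funext i; simp [RCLike.ofReal]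
  rw [hcoe] at hspec
  -- M ≠ 1
  have hM1 : M ≠ 1 := by
    intro h
    apply hXY
    rw [← hSS, ← hSMS, h, mul_one]
  -- some eigenvalue differs from 1
  have hexists : ∃ i, lam i ≠ 1 := by
    by_contra h
    push_neg at h
    apply hM1
    rw [hspec]
    have : diagonal lam = (1 : Matrix (Fin n) (Fin n) ℝ) := by
      rw [show lam = fun _ => (1:ℝ) from funext h]
      simp [Matrix.diagonal_one]
    rw [this, mul_one, hUU]
  obtain ⟨i₀, hi₀⟩ := hexists
  -- the convex combination
  have hkey : t • X + (1 - t) • Y = S * (t • 1 + (1 - t) • M) * S := by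
    rw [Matrix.mul_add, Matrix.add_mul, Matrix.mul_smul, Matrix.smul_mul,
      Matrix.mul_smul, Matrix.smul_mul, mul_one, hSS, hSMS]
  -- diagonalize the middle factor
  have hmid : t • (1 : Matrix (Fin n) (Fin n) ℝ) + (1 - t) • M
      = U * diagonal (fun i => t + (1 - t) * lam i) * star U := by
    rw [hspec]
    have h1 : (1 : Matrix (Fin n) (Fin n) ℝ) = U * 1 * star U := by
      rw [mul_one, hUU]
    calc t • (1 : Matrix (Fin n) (Fin n) ℝ) + (1 - t) • (U * diagonal lam * star U)
        = U * (t • 1 + (1 - t) • diagonal lam) * star U := by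
          rw [Matrix.mul_add, Matrix.add_mul, Matrix.mul_smul, Matrix.smul_mul,
            Matrix.mul_smul, Matrix.smul_mul, ← h1]
      _ = U * diagonal (fun i => t + (1 - t) * lam i) * star U := by
          congr 1
          congr 1
          ext i j
          by_cases h : i = j
          · subst h
            simp [Matrix.diagonal_apply_eq, Matrix.one_apply_eq]
          · simp [Matrix.diagonal_apply_ne _ h, Matrix.one_apply_ne h]
  -- determinant computations
  have hdetmid : (t • (1 : Matrix (Fin n) (Fin n) ℝ) + (1 - t) • M).det
      = ∏ i, (t + (1 - t) * lam i) := by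
    rw [hmid, det_mul_right_comm, hUU, one_mul, det_diagonal]
  have hdetM : M.det = ∏ i, lam i := by
    have := hM.1.det_eq_prod_eigenvalues
    simpa [RCLike.ofReal] using this
  have hYdet : 0 < Y.det := hY.det_pos
  have hdetMX : M.det * X.det = Y.det := by
    rw [hMdef, ← hSS]
    rw [det_mul, det_mul, det_mul]
    have hTdet : T.det = S.det⁻¹ := by rw [hTdef, det_nonsing_inv, Ring.inverse_eq_inv']
    rw [hTdet]; field_simp
  have hlogM : Real.log M.det = Real.log Y.det - Real.log X.det := by
    have : M.det = Y.det / X.det := by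
      exact (eq_div_iff hXdet.ne').mpr hdetMX
    rw [this, Real.log_div (by positivity) hXdet.ne']
  -- log of the product
  have hcomb_pos : ∀ i, 0 < t + (1 - t) * lam i := fun i => by
    have := hlam_pos i; positivity
  have hlogprod : Real.log ((t • X + (1 - t) • Y).det)
      = Real.log X.det + ∑ i, Real.log (t + (1 - t) * lam i) := by
    rw [hkey, det_mul, det_mul, mul_comm S.det, mul_assoc, mul_comm _ S.det, ← det_mul, hSS]
    rw [hdetmid, Real.log_mul (Finset.prod_pos (fun i _ => hcomb_pos i)).ne' hXdet.ne',
      Real.log_prod (fun i _ => (hcomb_pos i).ne'), add_comm]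
  -- the per-eigenvalue concavity inequality
  have hle : ∀ i, (1 - t) * Real.log (lam i) ≤ Real.log (t + (1 - t) * lam i) := by
    intro i
    have := strictConcaveOn_log_Ioi.concaveOn.2 (Set.mem_Ioi.mpr one_pos)
      (Set.mem_Ioi.mpr (hlam_pos i)) ht0.le ht1'.le (by ring)
    simpa [smul_eq_mul, Real.log_one] using this
  have hlt : (1 - t) * Real.log (lam i₀) < Real.log (t + (1 - t) * lam i₀) := by
    have := strictConcaveOn_log_Ioi.2 (Set.mem_Ioi.mpr one_pos)
      (Set.mem_Ioi.mpr (hlam_pos i₀)) (Ne.symm hi₀) ht0 ht1'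
    simpa [smul_eq_mul, Real.log_one] using this
  have hsum : ∑ i, (1 - t) * Real.log (lam i) < ∑ i, Real.log (t + (1 - t) * lam i) :=
    Finset.sum_lt_sum (fun i _ => hle i) ⟨i₀, Finset.mem_univ i₀, hlt⟩
  have hsumM : ∑ i, Real.log (lam i) = Real.log Y.det - Real.log X.det := by
    rw [← hlogM, hdetM, Real.log_prod (fun i _ => (hlam_pos i).ne')]
  rw [hlogprod]
  have : ∑ i, (1 - t) * Real.log (lam i) = (1 - t) * (Real.log Y.det - Real.log X.det) := by
    rw [← Finset.mul_sum, hsumM]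
  rw [this] at hsum
  linarith
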